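/- Let C_1 and C_2 be finite nonempty disjoint sets of real-weighted elements, partitioned as C_1 = D_{11} \cup D_{12} and C_2 = D_{21} \cup D_{22}. Write \mu_{ij} for the mean weight of D_{ij}, \lambda_i for the mean weight of C_i, and for a finite multiset F with mean m let s(F) = \sum_{e \in F} (w(e) - m)^2. Suppose \lambda_2 \ge \lambda_1, and suppose s(C_1) + s(C_2) \le s(C_1 \cup D_{21}) + s(D_{22}) and s(C_1) + s(C_2) \le s(D_{12}) + s(C_2 \cup D_{11}). Then \mu_{11} \le \mu_{21}. -/

import Mathlib

/-- Mean weight of a finite set of weighted elements. -/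
noncomputable def meanW {E : Type*} (w : E → ℝ) (F : Finset E) : ℝ :=
  (∑ e ∈ F, w e) / (F.card : ℝ)

/-- Density-uniformity score: sum of squared deviations from the mean. -/
noncomputable def scoreW {E : Type*} (w : E → ℝ) (F : Finset E) : ℝ :=
  ∑ e ∈ F, (w e - meanW w F) ^ 2

lemma sum_eq_card_mul_mean {E : Type*} (w : E → ℝ) (F : Finset E) (hF : F.Nonempty) :
    ∑ e ∈ F, w e = (F.card : ℝ) * meanW w F := by
  have hn : (F.card : ℝ) ≠ 0 := by
    exact_mod_cast hF.card_pos.ne'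
  unfold meanW
  field_simp

lemma sum_sq_shift {E : Type*} (w : E → ℝ) (F : Finset E) (hF : F.Nonempty) (a : ℝ) :
    ∑ e ∈ F, (w e - a) ^ 2 = scoreW w F + (F.card : ℝ) * (meanW w F - a) ^ 2 := by
  have hsum := sum_eq_card_mul_mean w F hF
  have h : ∀ e ∈ F, (w e - a) ^ 2 =
      (w e - meanW w F) ^ 2 + (2 * (meanW w F - a)) * w e + (a ^ 2 - (meanW w F) ^ 2) := by
    intro e _; ring
  rw [Finset.sum_congr rfl h, Finset.sum_add_distrib, Finset.sum_add_distrib,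
    ← Finset.mul_sum, Finset.sum_const, hsum]
  unfold scoreW
  ring

lemma mean_union {E : Type*} [DecidableEq E] (w : E → ℝ) (F G : Finset E)
    (hd : Disjoint F G) :
    ((F.card : ℝ) + G.card) * meanW w (F ∪ G) = F.card * meanW w F + G.card * meanW w G := by
  rcases F.eq_empty_or_nonempty with rfl | hF
  · simp [meanW]
  rcases G.eq_empty_or_nonempty with rfl | hG
  · simp [meanW]
  have h1 := sum_eq_card_mul_mean w F hF
  have h2 := sum_eq_card_mul_mean w G hG
  have h3 := sum_eq_card_mul_mean w (F ∪ G) (hF.mono Finset.subset_union_left)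
  rw [Finset.sum_union hd, h1, h2] at h3
  rw [Finset.card_union_of_disjoint hd] at h3
  push_cast at h3
  linarith

lemma score_union {E : Type*} [DecidableEq E] (w : E → ℝ) (F G : Finset E)
    (hd : Disjoint F G) (hF : F.Nonempty) (hG : G.Nonempty) :
    ((F.card : ℝ) + G.card) * scoreW w (F ∪ G) =
      ((F.card : ℝ) + G.card) * (scoreW w F + scoreW w G) +
        (F.card : ℝ) * G.card * (meanW w F - meanW w G) ^ 2 := by
  have hm := mean_union w F G hd
  set m := meanW w (F ∪ G) with hmdef
  have hsc : scoreW w (F ∪ G) =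
      scoreW w F + (F.card : ℝ) * (meanW w F - m) ^ 2 +
      (scoreW w G + (G.card : ℝ) * (meanW w G - m) ^ 2) := by
    unfold scoreW
    rw [Finset.sum_union hd, sum_sq_shift w F hF m, sum_sq_shift w G hG m]
    rfl
  rw [hsc]
  have hF' : (0:ℝ) < F.card := by exact_mod_cast hF.card_pos
  have hG' : (0:ℝ) < G.card := by exact_mod_cast hG.card_pos
  nlinarith [hm, sq_nonneg (meanW w F - meanW w G), sq_nonneg (meanW w F - m),
    sq_nonneg (meanW w G - m)]

lemma final_alg (a b q f lam₁ lam₂ μ₁₁ μ₂₁ : ℝ)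
    (ha : 0 < a) (hb : 0 < b) (hq : 0 < q) (hf : 0 < f)
    (hlam : lam₁ ≤ lam₂)
    (haux1 : (a + b) * (μ₂₁ - lam₂) ^ 2 ≤ a * (μ₂₁ - lam₁) ^ 2)
    (haux2 : (q + f) * (μ₁₁ - lam₁) ^ 2 ≤ q * (μ₁₁ - lam₂) ^ 2) :
    μ₁₁ ≤ μ₂₁ := by
  rcases eq_or_lt_of_le hlam with heq | hlt
  · rw [heq] at haux1 haux2
    have hX : (μ₂₁ - lam₂) ^ 2 ≤ 0 := by nlinarith [haux1, hb]
    have h21 : μ₂₁ = lam₂ := by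
      have h0 := le_antisymm hX (sq_nonneg _)
      have := sq_eq_zero_iff.mp h0
      linarith
    have hY : (μ₁₁ - lam₂) ^ 2 ≤ 0 := by nlinarith [haux2, hf]
    have h11 : μ₁₁ = lam₂ := by
      have h0 := le_antisymm hY (sq_nonneg _)
      have := sq_eq_zero_iff.mp h0
      linarith
    rw [h11, h21]
  · have g1 : lam₁ + lam₂ ≤ 2 * μ₂₁ := by
      nlinarith [haux1, sq_nonneg (μ₂₁ - lam₂), mul_pos ha (sub_pos.mpr hlt)]
    have g2 : 2 * μ₁₁ ≤ lam₁ + lam₂ := by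
      nlinarith [haux2, sq_nonneg (μ₁₁ - lam₁), mul_pos hq (sub_pos.mpr hlt)]
    linarith

theorem stmt_11 {E : Type*} [DecidableEq E] (w : E → ℝ)
    (C₁ C₂ D₁₁ D₁₂ D₂₁ D₂₂ : Finset E)
    (hC : Disjoint C₁ C₂) (hC₁ : C₁.Nonempty) (hC₂ : C₂.Nonempty)
    (h1 : C₁ = D₁₁ ∪ D₁₂) (h1d : Disjoint D₁₁ D₁₂)
    (h2 : C₂ = D₂₁ ∪ D₂₂) (h2d : Disjoint D₂₁ D₂₂)
    (hD₁₁ : D₁₁.Nonempty) (hD₂₁ : D₂₁.Nonempty)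
    (hlam : meanW w C₁ ≤ meanW w C₂)
    (hs1 : scoreW w C₁ + scoreW w C₂ ≤ scoreW w (C₁ ∪ D₂₁) + scoreW w D₂₂)
    (hs2 : scoreW w C₁ + scoreW w C₂ ≤ scoreW w D₁₂ + scoreW w (C₂ ∪ D₁₁)) :
    meanW w D₁₁ ≤ meanW w D₂₁ := by
  set a : ℝ := (C₁.card : ℝ) with hadef
  set q : ℝ := (C₂.card : ℝ) with hqdef
  set b : ℝ := (D₂₁.card : ℝ) with hbdef
  set c : ℝ := (D₂₂.card : ℝ) with hcdef
  set f : ℝ := (D₁₁.card : ℝ) with hfdef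
  set d : ℝ := (D₁₂.card : ℝ) with hddef
  set lam₁ : ℝ := meanW w C₁ with hl1
  set lam₂ : ℝ := meanW w C₂ with hl2
  set μ₁₁ : ℝ := meanW w D₁₁ with hm11
  set μ₁₂ : ℝ := meanW w D₁₂ with hm12
  set μ₂₁ : ℝ := meanW w D₂₁ with hm21
  set μ₂₂ : ℝ := meanW w D₂₂ with hm22
  have ha : (0:ℝ) < a := by rw [hadef]; exact_mod_cast hC₁.card_pos
  have hq : (0:ℝ) < q := by rw [hqdef]; exact_mod_cast hC₂.card_pos
  have hb : (0:ℝ) < b := by rw [hbdef]; exact_mod_cast hD₂₁.card_pos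
  have hf : (0:ℝ) < f := by rw [hfdef]; exact_mod_cast hD₁₁.card_pos
  have hc0 : (0:ℝ) ≤ c := by positivity
  have hd0 : (0:ℝ) ≤ d := by positivity
  have hd1 : Disjoint C₁ D₂₁ := hC.mono_right (h2 ▸ Finset.subset_union_left)
  have hd2 : Disjoint C₂ D₁₁ := hC.symm.mono_right (h1 ▸ Finset.subset_union_left)
  -- first key inequality
  have haux1 : (a + b) * (μ₂₁ - lam₂) ^ 2 ≤ a * (μ₂₁ - lam₁) ^ 2 := by
    rcases D₂₂.eq_empty_or_nonempty with h0 | hc'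
    · have hCeq : C₂ = D₂₁ := by rw [h2, h0, Finset.union_empty]
      have : lam₂ = μ₂₁ := by rw [hl2, hm21, hCeq]
      rw [this]
      simp only [sub_self, ne_eq, OfNat.ofNat_ne_zero, not_false_eq_true, zero_pow, mul_zero]
      positivity
    · have hc'' : (0:ℝ) < c := by rw [hcdef]; exact_mod_cast hc'.card_pos
      have E1 := score_union w C₁ D₂₁ hd1 hC₁ hD₂₁
      have E2 := score_union w D₂₁ D₂₂ h2d hD₂₁ hc'
      rw [← h2] at E2
      have hm2 := mean_union w D₂₁ D₂₂ h2d
      rw [← h2] at hm2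
      have hkey : c * (μ₂₁ - μ₂₂) = (b + c) * (μ₂₁ - lam₂) := by
        linear_combination hm2
      have hkey2 : (a+b) * b * (c * (μ₂₁ - μ₂₂)) ^ 2
          = (a+b) * b * ((b + c) * (μ₂₁ - lam₂)) ^ 2 := by rw [hkey]
      have hmul := mul_le_mul_of_nonneg_left hs1
        (le_of_lt (mul_pos (by linarith : (0:ℝ) < a + b) (by linarith : (0:ℝ) < b + c)))
      have E1' : (b+c) * ((a + b) * scoreW w (C₁ ∪ D₂₁))
          = (b+c) * ((a + b) * (scoreW w C₁ + scoreW w D₂₁) + a * b * (lam₁ - μ₂₁) ^ 2) := by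
        rw [E1]
      have E2' : (a+b) * ((b + c) * scoreW w C₂)
          = (a+b) * ((b + c) * (scoreW w D₂₁ + scoreW w D₂₂) + b * c * (μ₂₁ - μ₂₂) ^ 2) := by
        rw [E2]
      have ineq1 : (a+b) * (b * c * (μ₂₁ - μ₂₂) ^ 2) ≤ (b+c) * (a * b * (μ₂₁ - lam₁) ^ 2) := by
        linarith [hmul, E1', E2']
      have cineq1 := mul_le_mul_of_nonneg_left ineq1 hc''.le
      have slack : (0:ℝ) ≤ (a+b) * b * (b+c) * b * (μ₂₁ - lam₂) ^ 2 := by positivity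
      have step : (b * c * (b + c)) * ((a + b) * (μ₂₁ - lam₂) ^ 2)
          ≤ (b * c * (b + c)) * (a * (μ₂₁ - lam₁) ^ 2) := by
        linarith [cineq1, hkey2, slack]
      exact le_of_mul_le_mul_left step (by positivity)
  -- second key inequality
  have haux2 : (q + f) * (μ₁₁ - lam₁) ^ 2 ≤ q * (μ₁₁ - lam₂) ^ 2 := by
    rcases D₁₂.eq_empty_or_nonempty with h0 | hd'
    · have hCeq : C₁ = D₁₁ := by rw [h1, h0, Finset.union_empty]
      have : lam₁ = μ₁₁ := by rw [hl1, hm11, hCeq]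
      rw [← this]
      simp only [sub_self, ne_eq, OfNat.ofNat_ne_zero, not_false_eq_true, zero_pow, mul_zero]
      positivity
    · have hd'' : (0:ℝ) < d := by rw [hddef]; exact_mod_cast hd'.card_pos
      have E1 := score_union w C₂ D₁₁ hd2 hC₂ hD₁₁
      have E2 := score_union w D₁₁ D₁₂ h1d hD₁₁ hd'
      rw [← h1] at E2
      have hm1 := mean_union w D₁₁ D₁₂ h1d
      rw [← h1] at hm1
      have hkey : d * (μ₁₁ - μ₁₂) = (f + d) * (μ₁₁ - lam₁) := by
        linear_combination hm1
      have hkey2 : (q+f) * f * (d * (μ₁₁ - μ₁₂)) ^ 2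
          = (q+f) * f * ((f + d) * (μ₁₁ - lam₁)) ^ 2 := by rw [hkey]
      have hmul := mul_le_mul_of_nonneg_left hs2
        (le_of_lt (mul_pos (by linarith : (0:ℝ) < q + f) (by linarith : (0:ℝ) < f + d)))
      have E1' : (f+d) * ((q + f) * scoreW w (C₂ ∪ D₁₁))
          = (f+d) * ((q + f) * (scoreW w C₂ + scoreW w D₁₁) + q * f * (lam₂ - μ₁₁) ^ 2) := by
        rw [E1]
      have E2' : (q+f) * ((f + d) * scoreW w C₁)
          = (q+f) * ((f + d) * (scoreW w D₁₁ + scoreW w D₁₂) + f * d * (μ₁₁ - μ₁₂) ^ 2) := by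
        rw [E2]
      have ineq1 : (q+f) * (f * d * (μ₁₁ - μ₁₂) ^ 2) ≤ (f+d) * (q * f * (μ₁₁ - lam₂) ^ 2) := by
        linarith [hmul, E1', E2']
      have cineq1 := mul_le_mul_of_nonneg_left ineq1 hd''.le
      have slack : (0:ℝ) ≤ (q+f) * f * (f+d) * f * (μ₁₁ - lam₁) ^ 2 := by positivity
      have step : (f * d * (f + d)) * ((q + f) * (μ₁₁ - lam₁) ^ 2)
          ≤ (f * d * (f + d)) * (q * (μ₁₁ - lam₂) ^ 2) := by
        linarith [cineq1, hkey2, slack]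
      exact le_of_mul_le_mul_left step (by positivity)
  -- conclude
  exact final_alg a b q f lam₁ lam₂ μ₁₁ μ₂₁ ha hb hq hf hlam haux1 haux2
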